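/- Let P be the convex hull of finitely many probability distributions p₁,…,p_m on {-1,1}^n. A voting rule φ is P-robust (for each p ∈ P there is some i with rᵢ(φ,p) > 1/2) if and only if there exists a nonnegative weight vector w ∈ ℝ₊^n, w ≠ 0, such that (∑ᵢ wᵢ rᵢ(φ,pⱼ))/(∑ᵢ wᵢ) > 1/2 for every j = 1,…,m. -/

import Mathlib

open Finset

/-- The real value of a ±1 vote encoded as a `Bool` (`true ↦ 1`, `false ↦ -1`). -/
def sg (b : Bool) : ℝ := if b then 1 else -1

/-- Responsiveness of individual `i` under rule `φ` and distribution `p`. -/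
def resp {n : ℕ} (φ : (Fin n → Bool) → Bool) (p : (Fin n → Bool) → ℝ) (i : Fin n) : ℝ :=
  ∑ x : Fin n → Bool, if φ x = x i then p x else 0

/-- `p` is a probability distribution on profiles. -/
def IsProb {n : ℕ} (p : (Fin n → Bool) → ℝ) : Prop :=
  (∀ x, 0 ≤ p x) ∧ ∑ x : Fin n → Bool, p x = 1

lemma resp_mix {n m : ℕ} (φ : (Fin n → Bool) → Bool) (ps : Fin m → (Fin n → Bool) → ℝ)
    (lam : Fin m → ℝ) (i : Fin n) :
    resp φ (fun x => ∑ j, lam j * ps j x) i = ∑ j, lam j * resp φ (ps j) i := by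
  have key : ∀ x : Fin n → Bool,
      (if φ x = x i then (∑ j, lam j * ps j x) else 0)
        = ∑ j, (if φ x = x i then lam j * ps j x else 0) := by
    intro x; split <;> simp
  simp only [resp, key, Finset.mul_sum, mul_ite, mul_zero]
  exact Finset.sum_comm

/-- for `P` the convex hull of `p₁,…,p_m`, `φ` is `P`-robust iff there is a
nonnegative nonzero weight vector whose weighted average responsiveness strictly exceeds
one-half at every `pⱼ`. -/
theorem stmt_7 (n m : ℕ) (hm : 0 < m) (φ : (Fin n → Bool) → Bool)
    (ps : Fin m → (Fin n → Bool) → ℝ) (hps : ∀ j, IsProb (ps j)) :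
    (∀ lam : Fin m → ℝ, (∀ j, 0 ≤ lam j) → (∑ j, lam j) = 1 →
        ∃ i, (1 : ℝ) / 2 < resp φ (fun x => ∑ j, lam j * ps j x) i) ↔
    (∃ w : Fin n → ℝ, (∀ i, 0 ≤ w i) ∧ w ≠ 0 ∧
        ∀ j, (1 : ℝ) / 2 < (∑ i, w i * resp φ (ps j) i) / (∑ i, w i)) := by
  set A : Fin m → Fin n → ℝ := fun j i => resp φ (ps j) i with hA
  constructor
  · intro h
    -- the linear map sending weights `lam` to `∑ j, lam j • (A j - 1/2)`
    let T : (Fin m → ℝ) →ₗ[ℝ] (Fin n → ℝ) :=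
      { toFun := fun lam i => ∑ j, lam j * (A j i - 1/2)
        map_add' := by
          intro a b; funext i
          simp [add_mul, Finset.sum_add_distrib]
        map_smul' := by
          intro c a; funext i
          simp [Finset.mul_sum, mul_assoc] }
    set K : Set (Fin n → ℝ) := T '' stdSimplex ℝ (Fin m) with hK
    set C : Set (Fin n → ℝ) := Set.pi Set.univ (fun _ => Set.Iic (0:ℝ)) with hC
    have hCmem : ∀ y : Fin n → ℝ, y ∈ C ↔ ∀ i, y i ≤ 0 := by
      intro y
      rw [hC, Set.mem_univ_pi]
      simp only [Set.mem_Iic]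
    have hKcomp : IsCompact K := (isCompact_stdSimplex ℝ (Fin m)).image T.continuous_of_finiteDimensional
    have hKconv : Convex ℝ K := (convex_stdSimplex ℝ _).linear_image T
    have hCconv : Convex ℝ C := convex_pi (fun i _ => convex_Iic 0)
    have hCclosed : IsClosed C := isClosed_set_pi (fun i _ => isClosed_Iic)
    have hdisj : Disjoint K C := by
      rw [Set.disjoint_left]
      rintro x ⟨lam, hlam, rfl⟩ hxC
      obtain ⟨i, hi⟩ := h lam hlam.1 hlam.2
      rw [resp_mix] at hi
      have hx := (hCmem _).1 hxC i
      have hsum : (T lam) i = (∑ j, lam j * A j i) - 1/2 := by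
        show (∑ j, lam j * (A j i - 1/2)) = _
        have hterm : ∀ j, lam j * (A j i - 1/2) = lam j * A j i - lam j * (1/2) :=
          fun j => by ring
        simp only [hterm]
        rw [Finset.sum_sub_distrib, ← Finset.sum_mul, hlam.2, one_mul]
      rw [hsum] at hx
      linarith
    obtain ⟨f, u, s, hfK, hus, hfC⟩ :=
      geometric_hahn_banach_compact_closed hKconv hKcomp hCconv hCclosed hdisj
    have h0C : (0 : Fin n → ℝ) ∈ C := (hCmem _).2 (fun i => le_refl 0)
    have hs0 : s < 0 := by have := hfC 0 h0C; simpa using this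
    -- basis vectors
    set e : Fin n → (Fin n → ℝ) := fun i j => if i = j then 1 else 0 with he
    set w : Fin n → ℝ := fun i => -f (e i) with hw
    have hfx : ∀ x : Fin n → ℝ, f x = ∑ i, x i * f (e i) := by
      intro x
      conv_lhs => rw [pi_eq_sum_univ x]
      rw [map_sum]
      congr 1; funext i
      rw [map_smul]; simp [he, smul_eq_mul]
    have hwpos : ∀ i, 0 ≤ w i := by
      intro i
      by_contra hneg
      push_neg at hneg
      have hc : 0 < f (e i) := by simp [hw] at hneg; linarith
      -- y = t • (-(e i)) ∈ C gives s < -t * f(e i) for all t ≥ 0; contradiction at t = -s / f(e i)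
      set t : ℝ := -s / f (e i) with ht
      have ht0 : 0 ≤ t := le_of_lt (div_pos (by linarith) hc)
      have hyC : (fun j => -t * e i j) ∈ C := by
        refine (hCmem _).2 (fun j => ?_)
        by_cases hij : i = j <;> simp [he, hij] <;> nlinarith
      have := hfC _ hyC
      rw [hfx] at this
      have hval : (∑ j, (-t * e i j) * f (e j)) = -t * f (e i) := by
        rw [Finset.sum_eq_single i]
        · simp [he]
        · intro b _ hb; simp [he, Ne.symm hb]
        · simp
      rw [hval] at this
      have heqv : -t * f (e i) = s := by
        rw [ht]; field_simp
      rw [heqv] at this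
      exact lt_irrefl _ this
    have hfvj : ∀ j : Fin m, f (T (fun k => if k = j then 1 else 0)) < u := by
      intro j
      apply hfK
      refine ⟨_, ⟨fun k => ?_, ?_⟩, rfl⟩
      · split <;> norm_num
      · simp only [Finset.sum_ite_eq', Finset.mem_univ, if_true]
    have hTej : ∀ j : Fin m, T (fun k => if k = j then (1:ℝ) else 0) = fun i => A j i - 1/2 := by
      intro j; funext i
      show (∑ k, (if k = j then (1:ℝ) else 0) * (A k i - 1/2)) = _
      rw [Finset.sum_eq_single j]
      · rw [if_pos rfl, one_mul]
      · intro b _ hb; rw [if_neg hb, zero_mul]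
      · intro hj; exact absurd (Finset.mem_univ j) hj
    have hkey : ∀ j : Fin m, 0 < ∑ i, w i * (A j i - 1/2) := by
      intro j
      have h1 := hfvj j
      rw [hTej j, hfx] at h1
      have : ∑ i, w i * (A j i - 1/2) = -(∑ i, (A j i - 1/2) * f (e i)) := by
        rw [← Finset.sum_neg_distrib]
        congr 1; funext i; simp [hw]; ring
      rw [this]
      have hu0 : u < 0 := lt_trans hus hs0
      linarith
    have hwne : w ≠ 0 := by
      intro hw0
      obtain ⟨j⟩ : Nonempty (Fin m) := ⟨⟨0, hm⟩⟩
      have := hkey j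
      rw [hw0] at this
      simp at this
    refine ⟨w, hwpos, hwne, fun j => ?_⟩
    have hWpos : 0 < ∑ i, w i := by
      apply Finset.sum_pos' (fun i _ => hwpos i)
      by_contra hnone
      push_neg at hnone
      apply hwne
      funext i
      exact le_antisymm (hnone i (Finset.mem_univ i)) (hwpos i)
    rw [lt_div_iff₀ hWpos]
    have hexp : ∑ i, w i * (A j i - 1/2) = (∑ i, w i * A j i) - (∑ i, w i) * (1/2) := by
      rw [Finset.sum_mul, ← Finset.sum_sub_distrib]
      congr 1; funext i; ring
    have := hkey j
    rw [hexp] at this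
    linarith
  · rintro ⟨w, hw0, hwne, hwj⟩ lam hlam0 hlam1
    have hWpos : 0 < ∑ i, w i := by
      apply Finset.sum_pos' (fun i _ => hw0 i)
      by_contra hnone
      push_neg at hnone
      apply hwne
      funext i
      exact le_antisymm (hnone i (Finset.mem_univ i)) (hw0 i)
    have hj : ∀ j, (∑ i, w i) * (1/2) < ∑ i, w i * A j i := by
      intro j
      have := hwj j
      rw [lt_div_iff₀ hWpos] at this
      linarith
    by_contra hno
    push_neg at hno
    -- ∑ i w i * resp(mix) i ≤ (∑ w)/2 but also > (∑ w)/2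
    have hle : ∑ i, w i * resp φ (fun x => ∑ j, lam j * ps j x) i ≤ (∑ i, w i) * (1/2) := by
      rw [Finset.sum_mul]
      apply Finset.sum_le_sum
      intro i _
      exact mul_le_mul_of_nonneg_left (hno i) (hw0 i)
    have heq : ∑ i, w i * resp φ (fun x => ∑ j, lam j * ps j x) i
        = ∑ j, lam j * (∑ i, w i * A j i) := by
      simp only [resp_mix, Finset.mul_sum]
      rw [Finset.sum_comm]
      refine Finset.sum_congr rfl (fun j _ => ?_)
      refine Finset.sum_congr rfl (fun i _ => ?_)
      ring
    have hgt : (∑ i, w i) * (1/2) < ∑ j, lam j * (∑ i, w i * A j i) := by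
      have hsum : (∑ i, w i) * (1/2) = ∑ j, lam j * ((∑ i, w i) * (1/2)) := by
        rw [← Finset.sum_mul, hlam1, one_mul]
      rw [hsum]
      obtain ⟨j0, hj0⟩ : ∃ j0, 0 < lam j0 := by
        by_contra hc
        push_neg at hc
        have : (∑ j, lam j) = 0 := Finset.sum_eq_zero (fun j _ =>
          le_antisymm (hc j) (hlam0 j))
        rw [hlam1] at this; norm_num at this
      apply Finset.sum_lt_sum
      · intro j _
        exact mul_le_mul_of_nonneg_left (le_of_lt (hj j)) (hlam0 j)
      · exact ⟨j0, Finset.mem_univ j0, by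
          exact mul_lt_mul_of_pos_left (hj j0) hj0⟩
    rw [heq] at hle
    linarith
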